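/- Consider Algorithm: λ_{k+1} = λ_k + ρ u_k, where ρ > 0, λ₀ = 0, and u_k satisfies ‖u_k − ∇g_ρ(λ_k;θ_k)‖ ≤ √(2α_k/ρ). Assume: (a) g_ρ(·;θ) is concave differentiable with ∇g_ρ (1/ρ)-Lipschitz in λ for each θ; (b) ‖∇g_ρ(λ;θ₁) − ∇g_ρ(λ;θ₂)‖ ≤ M‖θ₁ − θ₂‖ for all λ; (c) λ* maximizes g_ρ(·;θ*), so the proximal map π_ρ(·;θ*) := (·) + ρ∇g_ρ(·;θ*) is nonexpansive and fixes λ*; (d) ‖θ_k − θ*‖ ≤ q^k‖θ₀ − θ*‖ with q ∈ (0,1); (e) Σ√α_k < ∞. Then for all k ≥ 1, ‖λ_k − λ*‖ ≤ √(2ρ) Σ_{i=0}^∞ √α_i + ρM‖θ₀ − θ*‖/(1 − q) + ‖λ*‖. -/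

import Mathlib

/-- Boundedness of the dual iterates of the misspecified inexact augmented Lagrangian
scheme: `‖λ_k − λ*‖ ≤ √(2ρ) Σ√α_i + ρM‖θ₀ − θ*‖/(1 − q) + ‖λ*‖` for all `k ≥ 1`. -/
theorem dual_iterates_bounded (mdim ddim : ℕ) (ρ M q : ℝ) (hρ : 0 < ρ) (hM : 0 ≤ M)
    (hq : q ∈ Set.Ioo (0 : ℝ) 1)
    (α : ℕ → ℝ) (hα : ∀ k, 0 ≤ α k) (hαsum : Summable fun k => Real.sqrt (α k))
    (G : EuclideanSpace ℝ (Fin ddim) → EuclideanSpace ℝ (Fin mdim) → ℝ)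
    (hconc : ∀ θ, ConcaveOn ℝ Set.univ (G θ))
    (hdiff : ∀ θ, Differentiable ℝ (G θ))
    (hlip : ∀ θ, ∀ lam₁ lam₂ : EuclideanSpace ℝ (Fin mdim),
      ‖gradient (G θ) lam₁ - gradient (G θ) lam₂‖ ≤ (1 / ρ) * ‖lam₁ - lam₂‖)
    (hlipθ : ∀ lam : EuclideanSpace ℝ (Fin mdim), ∀ θ₁ θ₂,
      ‖gradient (G θ₁) lam - gradient (G θ₂) lam‖ ≤ M * ‖θ₁ - θ₂‖)
    (θ : ℕ → EuclideanSpace ℝ (Fin ddim)) (θs : EuclideanSpace ℝ (Fin ddim))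
    (hrate : ∀ k, ‖θ k - θs‖ ≤ q ^ k * ‖θ 0 - θs‖)
    (lamstar : EuclideanSpace ℝ (Fin mdim))
    (hmax : ∀ lam, G θs lam ≤ G θs lamstar)
    (hnonexp : ∀ lam₁ lam₂ : EuclideanSpace ℝ (Fin mdim),
      ‖(lam₁ + ρ • gradient (G θs) lam₁) - (lam₂ + ρ • gradient (G θs) lam₂)‖ ≤ ‖lam₁ - lam₂‖)
    (hfix : lamstar + ρ • gradient (G θs) lamstar = lamstar)
    (lam : ℕ → EuclideanSpace ℝ (Fin mdim)) (u : ℕ → EuclideanSpace ℝ (Fin mdim))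
    (hlam0 : lam 0 = 0)
    (hu : ∀ k, ‖u k - gradient (G (θ k)) (lam k)‖ ≤ Real.sqrt (2 * α k / ρ))
    (hstep : ∀ k, lam (k + 1) = lam k + ρ • u k) :
    ∀ k ≥ 1, ‖lam k - lamstar‖ ≤
      Real.sqrt (2 * ρ) * (∑' i, Real.sqrt (α i)) + ρ * M * ‖θ 0 - θs‖ / (1 - q)
        + ‖lamstar‖ := by
  obtain ⟨hq0, hq1⟩ := hq
  set C : ℝ := ‖θ 0 - θs‖ with hC
  have hC0 : 0 ≤ C := norm_nonneg _
  have step : ∀ k, ‖lam (k + 1) - lamstar‖ ≤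
      ‖lam k - lamstar‖ + (Real.sqrt (2 * ρ) * Real.sqrt (α k) + ρ * M * C * q ^ k) := by
    intro k
    have hdecomp : lam (k + 1) - lamstar =
        ((lam k + ρ • gradient (G θs) (lam k)) - (lamstar + ρ • gradient (G θs) lamstar))
        + ρ • (u k - gradient (G (θ k)) (lam k))
        + ρ • (gradient (G (θ k)) (lam k) - gradient (G θs) (lam k)) := by
      rw [hstep k, hfix]
      module
    calc ‖lam (k + 1) - lamstar‖
        ≤ ‖(lam k + ρ • gradient (G θs) (lam k)) - (lamstar + ρ • gradient (G θs) lamstar)‖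
          + ‖ρ • (u k - gradient (G (θ k)) (lam k))‖
          + ‖ρ • (gradient (G (θ k)) (lam k) - gradient (G θs) (lam k))‖ := by
          rw [hdecomp]; exact norm_add₃_le
      _ ≤ ‖lam k - lamstar‖ + (Real.sqrt (2 * ρ) * Real.sqrt (α k) + ρ * M * C * q ^ k) := by
          have h1 := hnonexp (lam k) lamstar
          have h2 : ‖ρ • (u k - gradient (G (θ k)) (lam k))‖ ≤
              Real.sqrt (2 * ρ) * Real.sqrt (α k) := by
            rw [norm_smul, Real.norm_eq_abs, abs_of_pos hρ]
            have := hu k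
            calc ρ * ‖u k - gradient (G (θ k)) (lam k)‖
                ≤ ρ * Real.sqrt (2 * α k / ρ) := by
                  exact mul_le_mul_of_nonneg_left this hρ.le
              _ = Real.sqrt (ρ ^ 2 * (2 * α k / ρ)) := by
                  rw [Real.sqrt_mul (sq_nonneg ρ), Real.sqrt_sq hρ.le]
              _ = Real.sqrt (2 * ρ) * Real.sqrt (α k) := by
                  rw [← Real.sqrt_mul (by positivity : (0:ℝ) ≤ 2 * ρ)]
                  congr 1
                  field_simp
          have h3 : ‖ρ • (gradient (G (θ k)) (lam k) - gradient (G θs) (lam k))‖ ≤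
              ρ * M * C * q ^ k := by
            rw [norm_smul, Real.norm_eq_abs, abs_of_pos hρ]
            calc ρ * ‖gradient (G (θ k)) (lam k) - gradient (G θs) (lam k)‖
                ≤ ρ * (M * ‖θ k - θs‖) :=
                  mul_le_mul_of_nonneg_left (hlipθ (lam k) (θ k) θs) hρ.le
              _ ≤ ρ * (M * (q ^ k * C)) := by
                  have := hrate k
                  have : M * ‖θ k - θs‖ ≤ M * (q ^ k * C) :=
                    mul_le_mul_of_nonneg_left this hM
                  exact mul_le_mul_of_nonneg_left this hρ.le
              _ = ρ * M * C * q ^ k := by ring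
          linarith
  have hpartial : ∀ k, ‖lam k - lamstar‖ ≤ ‖lamstar‖ +
      ∑ i ∈ Finset.range k, (Real.sqrt (2 * ρ) * Real.sqrt (α i) + ρ * M * C * q ^ i) := by
    intro k
    induction k with
    | zero => simp [hlam0]
    | succ n ih =>
      rw [Finset.sum_range_succ]
      have := step n
      linarith
  intro k _
  have hsum1 : ∑ i ∈ Finset.range k, Real.sqrt (α i) ≤ ∑' i, Real.sqrt (α i) :=
    Summable.sum_le_tsum _ (fun i _ => Real.sqrt_nonneg _) hαsum
  have hgeom : Summable fun i => q ^ i :=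
    summable_geometric_of_lt_one hq0.le hq1
  have hsum2 : ∑ i ∈ Finset.range k, q ^ i ≤ 1 / (1 - q) := by
    have := Summable.sum_le_tsum (Finset.range k) (fun i _ => by positivity) hgeom
    rwa [tsum_geometric_of_lt_one hq0.le hq1, inv_eq_one_div] at this
  have hsplit : ∑ i ∈ Finset.range k, (Real.sqrt (2 * ρ) * Real.sqrt (α i) + ρ * M * C * q ^ i)
      = Real.sqrt (2 * ρ) * ∑ i ∈ Finset.range k, Real.sqrt (α i)
        + ρ * M * C * ∑ i ∈ Finset.range k, q ^ i := by
    rw [Finset.sum_add_distrib, Finset.mul_sum, Finset.mul_sum]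
  have h1 : Real.sqrt (2 * ρ) * ∑ i ∈ Finset.range k, Real.sqrt (α i) ≤
      Real.sqrt (2 * ρ) * ∑' i, Real.sqrt (α i) :=
    mul_le_mul_of_nonneg_left hsum1 (Real.sqrt_nonneg _)
  have h2 : ρ * M * C * ∑ i ∈ Finset.range k, q ^ i ≤ ρ * M * C / (1 - q) := by
    have h := mul_le_mul_of_nonneg_left hsum2 (by positivity : (0:ℝ) ≤ ρ * M * C)
    calc ρ * M * C * ∑ i ∈ Finset.range k, q ^ i ≤ ρ * M * C * (1 / (1 - q)) := h
      _ = ρ * M * C / (1 - q) := by ring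
  have := hpartial k
  rw [hsplit] at this
  linarith
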